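/- Let K be a number field with ring of integers O_K, 𝔭 a nonzero prime ideal, r ∈ O_K, and J := (y − r, 𝔭) the ideal of O_K[y] generated by y − r and the elements of 𝔭. Then for any z ≥ 1, the quotient ring O_K[y]/J^z is finite with cardinality at most N(𝔭)^{z(z+1)/2}, where N(𝔭) = |O_K/𝔭|. -/

import Mathlib

open NumberField Polynomial

lemma sum_range_sub_eq_gauss (z : ℕ) :
    (∑ i ∈ Finset.range z, (z - i)) = z * (z + 1) / 2 := by
  induction z with
  | zero => simp
  | succ n ih =>
    have hc : ∀ i ∈ Finset.range n, n + 1 - i = (n - i) + 1 := fun i hi => by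
      have := Finset.mem_range.mp hi; omega
    have h : ∑ i ∈ Finset.range (n + 1), (n + 1 - i) =
        (∑ i ∈ Finset.range n, (n - i)) + (n + 1) := by
      rw [Finset.sum_range_succ, Finset.sum_congr rfl hc, Finset.sum_add_distrib,
        Finset.sum_const, Finset.card_range, smul_eq_mul]
      omega
    have hnl : (n + 1) * (n + 1 + 1) = n * (n + 1) + 2 * (n + 1) := by ring
    omega

/-- Let `𝔭` be a nonzero prime ideal of `𝓞 K`, `r ∈ 𝓞 K`, and
`J := (y − r, 𝔭)` the ideal of `𝓞 K[y]` generated by `y − r` and the elements of `𝔭`.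
Then for any `z ≥ 1`, the quotient `𝓞 K[y]/J^z` is finite with cardinality at most
`N(𝔭)^(z(z+1)/2)`, where `N(𝔭) = |𝓞 K/𝔭|` is the absolute norm. -/
theorem quotient_pow_ideal_finite_card_le
    (K : Type*) [Field K] [NumberField K]
    (𝔭 : Ideal (𝓞 K)) (hprime : 𝔭.IsPrime) (hne : 𝔭 ≠ ⊥) (r : 𝓞 K) (z : ℕ) (hz : 1 ≤ z) :
    Finite (Polynomial (𝓞 K) ⧸
      (Ideal.span ({X - C r} ∪ C '' (𝔭 : Set (𝓞 K))) : Ideal (Polynomial (𝓞 K))) ^ z) ∧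
    Nat.card (Polynomial (𝓞 K) ⧸
      (Ideal.span ({X - C r} ∪ C '' (𝔭 : Set (𝓞 K))) : Ideal (Polynomial (𝓞 K))) ^ z) ≤
      (Ideal.absNorm 𝔭) ^ (z * (z + 1) / 2) := by
  set I : Ideal (Polynomial (𝓞 K)) :=
    Ideal.span ({X - C r} ∪ C '' (𝔭 : Set (𝓞 K))) with hI
  -- basic memberships
  have hXr : X - C r ∈ I := Ideal.subset_span (Or.inl rfl)
  have hmap : Ideal.map C 𝔭 ≤ I :=
    Ideal.map_le_iff_le_comap.mpr (fun x hx => Ideal.subset_span (Or.inr ⟨x, hx, rfl⟩))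
  have hCk : ∀ (k : ℕ) (d : 𝓞 K), d ∈ 𝔭 ^ k → C d ∈ I ^ k := by
    intro k d hd
    have h1 : C d ∈ Ideal.map C (𝔭 ^ k) := Ideal.mem_map_of_mem _ hd
    rw [Ideal.map_pow] at h1
    exact Ideal.pow_right_mono hmap k h1
  -- key: C d * (X - C r)^i ∈ I^z when d ∈ 𝔭^(z-i), i < z
  have hkey : ∀ (i : Fin z) (d : 𝓞 K), d ∈ 𝔭 ^ (z - (i : ℕ)) →
      C d * (X - C r) ^ (i : ℕ) ∈ I ^ z := by
    intro i d hd
    have h1 : C d * (X - C r) ^ (i : ℕ) ∈ I ^ (z - (i : ℕ)) * I ^ (i : ℕ) :=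
      Ideal.mul_mem_mul (hCk _ _ hd) (Ideal.pow_mem_pow hXr _)
    rwa [← pow_add, Nat.sub_add_cancel i.2.le] at h1
  -- finiteness of 𝓞 K ⧸ 𝔭^k
  have hfin : ∀ k : ℕ, 1 ≤ k → Finite (𝓞 K ⧸ 𝔭 ^ k) := by
    intro k hk
    have hpk : 𝔭 ^ k ≠ ⊥ := by
      intro h
      obtain ⟨x, hx, hx0⟩ := Submodule.exists_mem_ne_zero_of_ne_bot hne
      have : x ^ k ∈ 𝔭 ^ k := Ideal.pow_mem_pow hx _
      rw [h, Ideal.mem_bot] at this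
      exact hx0 (pow_eq_zero_iff (Nat.one_le_iff_ne_zero.mp hk) |>.mp this)
    exact Ideal.finiteQuotientOfFreeOfNeBot _ hpk
  have hfin' : ∀ i : Fin z, Finite (𝓞 K ⧸ 𝔭 ^ (z - (i : ℕ))) := fun i =>
    hfin _ (Nat.le_sub_of_add_le (by omega))
  -- the surjection
  letI : ∀ i : Fin z, Finite (𝓞 K ⧸ 𝔭 ^ (z - (i : ℕ))) := hfin'
  set J := I ^ z with hJ
  let F : (∀ i : Fin z, 𝓞 K ⧸ 𝔭 ^ (z - (i : ℕ))) → (Polynomial (𝓞 K) ⧸ J) := fun a =>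
    Ideal.Quotient.mk J (∑ i : Fin z, C ((a i).out) * (X - C r) ^ (i : ℕ))
  -- F is well-behaved on lifts
  have hFlift : ∀ (c : Fin z → 𝓞 K),
      F (fun i => Ideal.Quotient.mk _ (c i)) =
        Ideal.Quotient.mk J (∑ i : Fin z, C (c i) * (X - C r) ^ (i : ℕ)) := by
    intro c
    apply Ideal.Quotient.eq.mpr
    rw [← Finset.sum_sub_distrib]
    refine Ideal.sum_mem _ (fun i _ => ?_)
    rw [← sub_mul, ← C_sub]
    refine hkey i _ ?_
    have : Ideal.Quotient.mk (𝔭 ^ (z - (i : ℕ)))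
        ((Ideal.Quotient.mk (𝔭 ^ (z - (i : ℕ))) (c i)).out) =
        Ideal.Quotient.mk (𝔭 ^ (z - (i : ℕ))) (c i) := Quotient.out_eq' _
    exact Ideal.Quotient.eq.mp this
  have hFsurj : Function.Surjective F := by
    intro q
    obtain ⟨f, rfl⟩ := Ideal.Quotient.mk_surjective q
    set m : Polynomial (𝓞 K) := (X - C r) ^ z with hm
    have hmo : m.Monic := (monic_X_sub_C r).pow z
    have h1 : Ideal.Quotient.mk J f = Ideal.Quotient.mk J (f %ₘ m) := by
      apply Ideal.Quotient.eq.mpr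
      rw [modByMonic_eq_sub_mul_div f m, sub_sub_cancel]
      exact Ideal.mul_mem_right _ _ (Ideal.pow_mem_pow hXr z)
    set g := taylor r (f %ₘ m) with hg
    have hdeg : g.degree < (z : ℕ) := by
      rcases eq_or_ne (f %ₘ m) 0 with h | h
      · rw [hg, h, map_zero, degree_zero]
        exact WithBot.bot_lt_coe _
      · have hdm : (f %ₘ m).degree < m.degree := degree_modByMonic_lt f hmo
        have h3 : m.degree = (z : ℕ) := by
          rw [hm, degree_pow, degree_X_sub_C]; simp
        have h4 : g ≠ 0 := fun h0 => h (taylor_injective r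
          (show taylor r (f %ₘ m) = taylor r 0 by rw [← hg, h0, map_zero]))
        rw [degree_eq_natDegree h4, hg, natDegree_taylor, ← degree_eq_natDegree h, ← h3]
        exact hdm
    have h2 : (∑ i : Fin z, C (g.coeff i) * (X - C r) ^ (i : ℕ)) = f %ₘ m := by
      rw [← sum_taylor_eq (f %ₘ m) r]
      exact sum_fin (fun i a => C a * (X - C r) ^ i) (fun i => by simp) hdeg
    refine ⟨fun i => Ideal.Quotient.mk _ (g.coeff i), ?_⟩
    rw [hFlift, h2, ← h1]
  have hFinD : Finite (∀ i : Fin z, 𝓞 K ⧸ 𝔭 ^ (z - (i : ℕ))) := Pi.finite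
  constructor
  · exact Finite.of_surjective F hFsurj
  · calc Nat.card (Polynomial (𝓞 K) ⧸ J) ≤
        Nat.card (∀ i : Fin z, 𝓞 K ⧸ 𝔭 ^ (z - (i : ℕ))) :=
          Nat.card_le_card_of_surjective F hFsurj
    _ = ∏ i : Fin z, Nat.card (𝓞 K ⧸ 𝔭 ^ (z - (i : ℕ))) := Nat.card_pi
    _ = ∏ i : Fin z, Ideal.absNorm 𝔭 ^ (z - (i : ℕ)) := by
        refine Finset.prod_congr rfl (fun i _ => ?_)
        rw [← map_pow, Ideal.absNorm_apply, Submodule.cardQuot_apply]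
    _ = Ideal.absNorm 𝔭 ^ (∑ i : Fin z, (z - (i : ℕ))) := Finset.prod_pow_eq_pow_sum ..
    _ = Ideal.absNorm 𝔭 ^ (z * (z + 1) / 2) := by
        congr 1
        rw [Fin.sum_univ_eq_sum_range]
        exact sum_range_sub_eq_gauss z
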